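/- arXiv:2110.00827 — 4 statements merged into one kernel-verified Lean document; each statement's English description precedes it below -/
import Mathlib

section
/- For every finite abelian group V and every real r ≥ 1, there exist subsets W1, W2 ⊆ V with W1 - W2 = V, |W1| ≤ 2⌈√(|V|·r)⌉, and |W2| ≤ ⌈√(|V|/r)⌉. -/
open Pointwise

lemma exists_nsmul_rep {V : Type*} [AddCommGroup V] {v x : V} (hd : 0 < addOrderOf v)
    (hx : x ∈ AddSubgroup.zmultiples v) : ∃ k : ℕ, k < addOrderOf v ∧ k • v = x := by
  obtain ⟨k, hk⟩ := AddSubgroup.mem_zmultiples_iff.mp hx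
  set d := addOrderOf v with hdef
  have hdz : (0:ℤ) < (d:ℤ) := by exact_mod_cast hd
  refine ⟨(k % d).toNat, ?_, ?_⟩
  · have h1 : k % (d:ℤ) < d := Int.emod_lt_of_pos k hdz
    omega
  · have hnn : (0:ℤ) ≤ k % d := Int.emod_nonneg k (by omega)
    have h2 : ((k % (d:ℤ)).toNat : ℤ) = k % d := Int.toNat_of_nonneg hnn
    have h3 : ((k % (d:ℤ)).toNat : ℤ) • v = (k % (d:ℤ)) • v := by rw [h2]
    rw [← hk, ← natCast_zsmul] at *
    rw [h3]
    have hdv : (d:ℤ) • v = 0 := by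
      rw [natCast_zsmul]; exact addOrderOf_nsmul_eq_zero v
    conv_rhs => rw [← Int.emod_add_mul_ediv k d]
    rw [add_zsmul, mul_comm (d:ℤ), mul_zsmul, hdv, smul_zero, add_zero]

lemma nat_key {t b d : ℕ} (hb : 1 ≤ b) (hbd : b < d) (htb : t * b ≤ d - 1) :
    (t + 1) * (b + 1) ≤ 2 * d := by
  rcases Nat.eq_zero_or_pos t with rfl | ht1
  · omega
  · have h2 : t + b ≤ t * b + 1 := by
      obtain ⟨t', rfl⟩ := Nat.exists_eq_add_of_le ht1
      obtain ⟨b', rfl⟩ := Nat.exists_eq_add_of_le hb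
      nlinarith
    have htb' : t * b + 1 ≤ d := by omega
    nlinarith

universe u

lemma keylemma : ∀ n : ℕ, ∀ (V : Type u) (_ : AddCommGroup V) (_ : Fintype V),
    Fintype.card V = n → ∀ m : ℕ, 1 ≤ m → m ≤ n →
    ∃ A B : Finset V, (A : Set V) + (B : Set V) = Set.univ ∧
      B.card ≤ m ∧ A.card * m ≤ 2 * n := by
  intro n
  induction n using Nat.strong_induction_on with
  | _ n ih =>
  intro V _ _ hcard m hm1 hmn
  classical
  rcases eq_or_lt_of_le hmn with hmeq | hmlt
  · -- m = n : A = {0}, B = univ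
    refine ⟨{0}, Finset.univ, ?_, ?_, ?_⟩
    · ext x; simp
    · simp only [Finset.card_univ, hcard]; omega
    · simp only [Finset.card_singleton, one_mul]; omega
  · -- m < n, so n ≥ 2
    have hn2 : 2 ≤ n := by omega
    have h1n : 1 < Fintype.card V := by omega
    have : Nontrivial V := Fintype.one_lt_card_iff_nontrivial.mp h1n
    obtain ⟨v, hv⟩ := exists_ne (0 : V)
    set d := addOrderOf v with hddef
    have hd1 : 1 < d := by
      have hpos : 0 < d := (addOrderOf_pos_iff).mpr (isOfFinAddOrder_of_finite v)
      by_contra h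
      have h1 : d = 1 := by omega
      exact hv (AddMonoid.addOrderOf_eq_one_iff.mp h1)
    set H := AddSubgroup.zmultiples v with hHdef
    have : Fintype (V ⧸ H) := Fintype.ofFinite _
    set Q := Fintype.card (V ⧸ H) with hQdef
    have hQd : Q * d = n := by
      have := AddSubgroup.card_eq_card_quotient_mul_card_addSubgroup H
      rw [Nat.card_eq_fintype_card, Nat.card_eq_fintype_card] at this
      rw [hcard] at this
      rw [this, Nat.card_zmultiples]
    have hQpos : 0 < Q := by positivity
    have hQlt : Q < n := by nlinarith
    -- representative facts
    have hrep : ∀ z : V ⧸ H, (QuotientAddGroup.mk z.out : V ⧸ H) = z := fun z => Quotient.out_eq z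
    have hmem : ∀ x : V, ∃ k : ℕ, k < d ∧ x = k • v + (QuotientAddGroup.mk x : V ⧸ H).out := by
      intro x
      have : x - (QuotientAddGroup.mk x : V ⧸ H).out ∈ H := by
        rw [← QuotientAddGroup.eq_iff_sub_mem, hrep]
      obtain ⟨k, hk, hkv⟩ := exists_nsmul_rep (by omega) this
      exact ⟨k, hk, by rw [hkv]; abel⟩
    rcases le_or_gt m Q with hmQ | hQm
    · -- case A : recurse on quotient
      obtain ⟨A', B', hcov, hB', hA'⟩ := ih Q hQlt (V ⧸ H) inferInstance inferInstance rfl m hm1 hmQ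
      refine ⟨A'.image Quotient.out + (Finset.range d).image (· • v), B'.image Quotient.out,
        ?_, ?_, ?_⟩
      · apply Set.eq_univ_of_forall
        intro x
        have hx : (QuotientAddGroup.mk x : V ⧸ H) ∈ (A' : Set (V ⧸ H)) + (B' : Set (V ⧸ H)) := by
          rw [hcov]; trivial
        obtain ⟨a', ha', b', hb', hab⟩ := hx
        have hsub : x - (a'.out + b'.out) ∈ H := by
          rw [← QuotientAddGroup.eq_iff_sub_mem, QuotientAddGroup.mk_add, hrep, hrep]
          exact hab.symm
        obtain ⟨k, hk, hkv⟩ := exists_nsmul_rep (by omega) hsub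
        refine Set.mem_add.mpr ⟨a'.out + k • v, ?_, b'.out, ?_, ?_⟩
        · exact Finset.mem_coe.mpr (Finset.add_mem_add
            (Finset.mem_image_of_mem _ ha') (Finset.mem_image_of_mem _ (Finset.mem_range.mpr hk)))
        · exact Finset.mem_coe.mpr (Finset.mem_image_of_mem _ hb')
        · rw [hkv]; abel
      · exact (Finset.card_image_le).trans hB'
      · calc (A'.image Quotient.out + (Finset.range d).image (· • v)).card * m
            ≤ (A'.card * d) * m := by
              apply Nat.mul_le_mul_right
              refine Finset.card_add_le.trans ?_
              exact Nat.mul_le_mul Finset.card_image_le (Finset.card_image_le.trans (by simp))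
          _ = (A'.card * m) * d := by ring
          _ ≤ (2 * Q) * d := Nat.mul_le_mul_right _ hA'
          _ = 2 * n := by rw [mul_assoc, hQd]
    · -- case B : Q < m < n
      set b := m / Q with hbdef
      have hb1 : 1 ≤ b := Nat.one_le_div_iff hQpos |>.mpr hQm.le
      have hbd : b < d := Nat.div_lt_of_lt_mul (by omega)
      set t := (d - 1) / b with htdef
      have htb : t * b ≤ d - 1 := Nat.div_mul_le_self _ _
      have hkey : (t + 1) * (b + 1) ≤ 2 * d := nat_key hb1 hbd htb
      refine ⟨(Finset.range (t + 1)).image (fun q => (q * b) • v),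
        (Finset.univ : Finset (V ⧸ H)).image Quotient.out + (Finset.range b).image (· • v),
        ?_, ?_, ?_⟩
      · apply Set.eq_univ_of_forall
        intro x
        obtain ⟨k, hk, hkv⟩ := hmem x
        refine Set.mem_add.mpr ⟨(k / b * b) • v, ?_,
          (QuotientAddGroup.mk x : V ⧸ H).out + (k % b) • v, ?_, ?_⟩
        · refine Finset.mem_coe.mpr (Finset.mem_image_of_mem _ (Finset.mem_range.mpr ?_))
          have : k / b ≤ (d - 1) / b := Nat.div_le_div_right (by omega)
          omega
        · exact Finset.mem_coe.mpr (Finset.add_mem_add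
            (Finset.mem_image_of_mem _ (Finset.mem_univ _))
            (Finset.mem_image_of_mem _ (Finset.mem_range.mpr (Nat.mod_lt _ (by omega)))))
        · have hk2 : k / b * b + k % b = k := Nat.div_add_mod' k b
          have hsm : (k / b * b) • v + (k % b) • v = k • v := by rw [← add_smul, hk2]
          calc (k / b * b) • v + ((QuotientAddGroup.mk x : V ⧸ H).out + (k % b) • v)
              = ((k / b * b) • v + (k % b) • v) + (QuotientAddGroup.mk x : V ⧸ H).out := by abel
            _ = k • v + (QuotientAddGroup.mk x : V ⧸ H).out := by rw [hsm]
            _ = x := hkv.symm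
      · calc ((Finset.univ : Finset (V ⧸ H)).image Quotient.out + (Finset.range b).image (· • v)).card
            ≤ Q * b := by
              refine Finset.card_add_le.trans ?_
              exact Nat.mul_le_mul (Finset.card_image_le.trans Finset.card_univ.le)
                (Finset.card_image_le.trans (Finset.card_range b).le)
          _ ≤ m := by rw [mul_comm]; exact Nat.div_mul_le_self m Q
      · have hm_lt : m ≤ Q * (b + 1) := by
          have h1 : Q * (m / Q) + m % Q = m := Nat.div_add_mod m Q
          have h2 : m % Q < Q := Nat.mod_lt _ hQpos
          have h3 : b = m / Q := hbdef
          rw [← h3] at h1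
          nlinarith
        calc ((Finset.range (t + 1)).image (fun q => (q * b) • v)).card * m
            ≤ (t + 1) * m := Nat.mul_le_mul_right _ (Finset.card_image_le.trans (by simp))
          _ ≤ (t + 1) * (Q * (b + 1)) := Nat.mul_le_mul_left _ hm_lt
          _ = Q * ((t + 1) * (b + 1)) := by ring
          _ ≤ Q * (2 * d) := Nat.mul_le_mul_left _ hkey
          _ = 2 * n := by rw [← hQd]; ring

lemma keylemma_univ (V : Type*) [AddCommGroup V] [Fintype V] (m : ℕ) (hm1 : 1 ≤ m)
    (hmn : m ≤ Fintype.card V) :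
    ∃ A B : Finset V, (A : Set V) + (B : Set V) = Set.univ ∧
      B.card ≤ m ∧ A.card * m ≤ 2 * Fintype.card V :=
  keylemma (Fintype.card V) V ‹_› ‹_› rfl m hm1 hmn

theorem stmt6 (V : Type*) [AddCommGroup V] [Fintype V] (r : ℝ) (hr : 1 ≤ r) :
    ∃ W1 W2 : Finset V, (W1 : Set V) - (W2 : Set V) = Set.univ ∧
      W1.card ≤ 2 * ⌈Real.sqrt ((Fintype.card V : ℝ) * r)⌉₊ ∧
      W2.card ≤ ⌈Real.sqrt ((Fintype.card V : ℝ) / r)⌉₊ := by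
  classical
  set n := Fintype.card V with hn
  have hn1 : 1 ≤ n := Fintype.card_pos
  have hr0 : (0:ℝ) < r := lt_of_lt_of_le one_pos hr
  set m := ⌈Real.sqrt ((n : ℝ) / r)⌉₊ with hm
  have hm1 : 1 ≤ m := Nat.one_le_iff_ne_zero.mpr (by
    have : 0 < m := Nat.ceil_pos.mpr (Real.sqrt_pos.mpr (by positivity))
    omega)
  rcases le_or_gt m n with hmn | hnm
  · obtain ⟨A, B, hcov, hB, hA⟩ :=
      keylemma_univ V m hm1 hmn
    refine ⟨A, -B, ?_, ?_, ?_⟩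
    · rw [Finset.coe_neg, sub_neg_eq_add, hcov]
    · -- A.card ≤ 2 * ceil sqrt (n r)
      have hreal : (n:ℝ) ≤ (⌈Real.sqrt ((n:ℝ) * r)⌉₊ : ℝ) * (⌈Real.sqrt ((n:ℝ) / r)⌉₊ : ℝ) := by
        have h1 := Nat.le_ceil (Real.sqrt ((n:ℝ) * r))
        have h2 := Nat.le_ceil (Real.sqrt ((n:ℝ) / r))
        have h3 : Real.sqrt ((n:ℝ) * r) * Real.sqrt ((n:ℝ) / r) = n := by
          rw [← Real.sqrt_mul (by positivity)]
          have : (n:ℝ) * r * ((n:ℝ) / r) = (n:ℝ) ^ 2 := by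
            field_simp
          rw [this, Real.sqrt_sq (by positivity)]
        nlinarith [Real.sqrt_nonneg ((n:ℝ) * r), Real.sqrt_nonneg ((n:ℝ) / r)]
      have hkey : n ≤ ⌈Real.sqrt ((n:ℝ) * r)⌉₊ * m := by exact_mod_cast hreal
      have h4 : A.card * m ≤ (2 * ⌈Real.sqrt ((n:ℝ) * r)⌉₊) * m := by
        calc A.card * m ≤ 2 * n := hA
          _ ≤ 2 * (⌈Real.sqrt ((n:ℝ) * r)⌉₊ * m) := by omega
          _ = (2 * ⌈Real.sqrt ((n:ℝ) * r)⌉₊) * m := by ring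
      exact Nat.le_of_mul_le_mul_right h4 (by omega)
    · simpa [Finset.card_neg] using hB
  · refine ⟨Finset.univ, {0}, ?_, ?_, ?_⟩
    · ext x
      simp [Set.mem_sub]
    · have h5 : m ≤ ⌈Real.sqrt ((n:ℝ) * r)⌉₊ := by
        apply Nat.ceil_le_ceil
        apply Real.sqrt_le_sqrt
        calc (n:ℝ) / r ≤ n := by
              apply div_le_self (by positivity) hr
          _ ≤ (n:ℝ) * r := le_mul_of_one_le_right (by positivity) hr
      calc Finset.univ.card = n := by rw [Finset.card_univ]
        _ ≤ 2 * ⌈Real.sqrt ((n:ℝ) * r)⌉₊ := by omega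
    · simpa using hm1
end

section
/- Every finite abelian group V admits subsets W1, W2 with W1 - W2 = V and |W1| + |W2| ≤ 3⌈√|V|⌉ + 1 (in particular both of size O(√|V|)). -/
open Pointwise

private lemma key_ineq (m h c N s : ℤ) (hh : 1 ≤ h) (hm2 : 2*h ≤ m)
    (hsh : s*h ≤ m) (hsh2 : m + 1 ≤ s*h + h) (hhc : m + 1 ≤ h*c)
    (hn : N*c*h ≤ m^2) (hN : 1 ≤ N) :
    (c - 1 + s) * (N * h) ≤ 2*m*(s*h) := by
  have hm : 2 ≤ m := by linarith
  have hNm : N ≤ m - 1 := by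
    nlinarith [mul_le_mul_of_nonneg_left hhc (by linarith : (0:ℤ) ≤ N)]
  have P1 : 0 ≤ (s*h - (m+1-h)) * (2*m - N) := mul_nonneg (by linarith) (by linarith)
  have P2 : 0 ≤ (m - 1 - N) * (m + 1 - 2*h) := mul_nonneg (by linarith) (by linarith)
  nlinarith [P1, P2, hn]

theorem stmt7 (V : Type*) [AddCommGroup V] [Fintype V] :
    ∃ W1 W2 : Finset V, (W1 : Set V) - (W2 : Set V) = Set.univ ∧
      W1.card + W2.card ≤ 3 * ⌈Real.sqrt (Fintype.card V : ℝ)⌉₊ + 1 := by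
  classical
  set n := Fintype.card V with hn
  set m := ⌈Real.sqrt (n : ℝ)⌉₊ with hmdef
  have hn1 : 0 < n := Fintype.card_pos
  have hm1 : 1 ≤ m := by
    rw [hmdef]
    have h0 : (0:ℝ) < Real.sqrt n := Real.sqrt_pos.mpr (by exact_mod_cast hn1)
    have := Nat.ceil_pos.mpr h0
    omega
  have hnm : n ≤ m^2 := by
    have h1 : Real.sqrt (n:ℝ) ≤ (m:ℝ) := Nat.le_ceil _
    have h0 : (0:ℝ) ≤ (n:ℝ) := by positivity
    have h2 : (n:ℝ) ≤ (m:ℝ)^2 := by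
      nlinarith [Real.sq_sqrt h0, Real.sqrt_nonneg (n:ℝ)]
    exact_mod_cast h2
  by_cases hsmall : n ≤ m
  · refine ⟨Finset.univ, {0}, ?_, ?_⟩
    · apply Set.eq_univ_of_forall
      intro v
      rw [Set.mem_sub]
      exact ⟨v, by simp, 0, by simp, sub_zero v⟩
    · simp only [Finset.card_univ, Finset.card_singleton, ← hn]
      omega
  · push_neg at hsmall
    set P : ℕ → Prop := fun k => ∃ H : AddSubgroup V, Nat.card H = k with hPdef
    have hP1 : P 1 := ⟨⊥, AddSubgroup.card_bot⟩
    set h := Nat.findGreatest P m with hhdef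
    have hh1 : 1 ≤ h := Nat.le_findGreatest hm1 hP1
    have hhm : h ≤ m := Nat.findGreatest_le m
    obtain ⟨H, hHcard⟩ : P h := Nat.findGreatest_spec hm1 hP1
    have hHne : ∃ g : V, g ∉ H := by
      by_contra hall
      push_neg at hall
      have htop : H = ⊤ := by ext x; simpa using hall x
      have : Nat.card H = n := by
        rw [htop, hn, ← Nat.card_eq_fintype_card]
        exact Nat.card_congr AddSubgroup.topEquiv.toEquiv
      omega
    obtain ⟨g, hg⟩ := hHne
    set π : V →+ V ⧸ H := QuotientAddGroup.mk' H with hπdef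
    set gb : V ⧸ H := π g with hgbdef
    have hgb : gb ≠ 0 := by
      intro e
      apply hg
      apply (QuotientAddGroup.eq_zero_iff g).1
      rw [hgbdef, hπdef, QuotientAddGroup.mk'_apply] at e
      exact e
    set c := addOrderOf gb with hcdef
    have hczero : c • gb = 0 := by rw [hcdef]; exact addOrderOf_nsmul_eq_zero gb
    have hc1 : 0 < c := by rw [hcdef]; exact addOrderOf_pos gb
    have hc2 : 2 ≤ c := by
      rcases Nat.lt_or_ge c 2 with h' | h'
      · exfalso
        have hc1' : c = 1 := by omega
        rw [hcdef] at hc1'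
        exact hgb (AddMonoid.addOrderOf_eq_one_iff.mp hc1')
      · exact h'
    set C : AddSubgroup (V ⧸ H) := AddSubgroup.zmultiples gb with hCdef
    have hcC : Nat.card C = c := by rw [hCdef, hcdef]; exact Nat.card_zmultiples gb
    set N := Nat.card ((V ⧸ H) ⧸ C) with hNdef
    have hN1 : 1 ≤ N := Nat.card_pos
    have hn_eq : n = N * c * h := by
      have h1 : Nat.card (V ⧸ H) = N * c := by
        rw [AddSubgroup.card_eq_card_quotient_mul_card_addSubgroup C, hcC, hNdef]
      have h2 : Nat.card V = Nat.card (V ⧸ H) * Nat.card H :=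
        AddSubgroup.card_eq_card_quotient_mul_card_addSubgroup H
      rw [hn, ← Nat.card_eq_fintype_card, h2, h1, hHcard]
    -- the subgroup K = H ⊔ ⟨g⟩ has card > m and ≤ h * c
    set K : AddSubgroup V := H ⊔ AddSubgroup.zmultiples g with hKdef
    have hgK : g ∈ K := AddSubgroup.mem_sup_right (AddSubgroup.mem_zmultiples g)
    have hcgH : c • g ∈ H := by
      apply (QuotientAddGroup.eq_zero_iff _).1
      have hπ : π (c • g) = 0 := by rw [map_nsmul]; exact hczero
      rwa [hπdef, QuotientAddGroup.mk'_apply] at hπ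
    have hKle : Nat.card K ≤ h * c := by
      set f : H × Fin c → V := fun p => (p.1 : V) + (p.2 : ℕ) • g with hfdef
      have hsub : (K : Set V) ⊆ Set.range f := by
        intro x hx
        obtain ⟨y, hy, z, hz, hyz⟩ := AddSubgroup.mem_sup.1 hx
        obtain ⟨a, ha⟩ := AddSubgroup.mem_zmultiples_iff.1 hz
        have hc0 : (0:ℤ) < (c:ℤ) := by exact_mod_cast hc1
        have hr0 : (0:ℤ) ≤ a % (c:ℤ) := Int.emod_nonneg a (by omega)
        have hrlt : a % (c:ℤ) < (c:ℤ) := Int.emod_lt_of_pos a hc0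
        set r : ℕ := (a % (c:ℤ)).toNat with hrdef
        have hrc : r < c := by omega
        have hmem : y + (a / (c:ℤ)) • (c • g) ∈ H :=
          H.add_mem hy (H.zsmul_mem hcgH _)
        refine ⟨(⟨_, hmem⟩, ⟨r, hrc⟩), ?_⟩
        have hreq : ((r:ℕ) : ℤ) = a % (c:ℤ) := Int.toNat_of_nonneg hr0
        have hkey : (a / (c:ℤ)) • (c • g) + (r : ℕ) • g = a • g := by
          rw [← natCast_zsmul g c, ← natCast_zsmul g r, hreq, smul_smul, ← add_zsmul]
          congr 1
          rw [mul_comm]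
          exact Int.mul_ediv_add_emod a (c:ℤ)
        show (y + (a / (c:ℤ)) • (c • g)) + (r:ℕ) • g = x
        rw [add_assoc, hkey, ha, hyz]
      calc Nat.card K = (K : Set V).ncard := by
            rw [← Nat.card_coe_set_eq]; rfl
        _ ≤ (Set.range f).ncard := Set.ncard_le_ncard hsub (Set.toFinite _)
        _ ≤ Nat.card (H × Fin c) := by
            rw [← Set.ncard_univ (H × Fin c), ← Set.image_univ]
            exact Set.ncard_image_le (Set.toFinite _)
        _ = h * c := by
            rw [Nat.card_prod, hHcard, Nat.card_eq_fintype_card, Fintype.card_fin]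
    have hKgt : h < Nat.card K := by
      have hss : (H : Set V) ⊂ (K : Set V) := by
        constructor
        · exact SetLike.coe_subset_coe.2 le_sup_left
        · intro hKH
          exact hg (hKH hgK)
      have hlt := Set.ncard_lt_ncard hss (Set.toFinite _)
      have e1 : (H : Set V).ncard = h := by
        rw [← Nat.card_coe_set_eq]
        exact hHcard
      have e2 : (K : Set V).ncard = Nat.card K := by
        rw [← Nat.card_coe_set_eq]; rfl
      omega
    have hhcm : m + 1 ≤ h * c := by
      have hmK : m + 1 ≤ Nat.card K := by
        by_contra hcon
        push_neg at hcon
        have : Nat.card K ≤ h := Nat.le_findGreatest (by omega) ⟨K, rfl⟩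
        omega
      omega
    -- parameters
    set s := m / h with hsdef
    have hs1 : 1 ≤ s := by
      rw [hsdef]
      exact (Nat.one_le_div_iff (by omega)).2 hhm
    have hdm : h * s + m % h = m := by rw [hsdef]; exact Nat.div_add_mod m h
    have hmod : m % h < h := Nat.mod_lt m (by omega)
    have hsh : s * h ≤ m := by rw [hsdef]; exact Nat.div_mul_le_self m h
    have hsh2 : m + 1 ≤ s * h + h := by nlinarith [hdm, hmod]
    set t := (c-1)/s + 1 with htdef
    haveI : Fintype ((V ⧸ H) ⧸ C) := Fintype.ofFinite _
    haveI : Fintype H := Fintype.ofFinite _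
    set f1 : Fin t × ((V ⧸ H) ⧸ C) → V :=
      fun p => Quotient.out (Quotient.out p.2) + ((p.1 : ℕ) * s) • g with hf1def
    set f2 : Fin s × H → V := fun p => -(((p.1 : ℕ)) • g + (p.2 : V)) with hf2def
    refine ⟨Finset.image f1 Finset.univ, Finset.image f2 Finset.univ, ?_, ?_⟩
    · -- coverage
      apply Set.eq_univ_of_forall
      intro v
      rw [Set.mem_sub]
      set y2 : (V ⧸ H) ⧸ C := QuotientAddGroup.mk (π v) with hy2def
      set u : V ⧸ H := Quotient.out y2 with hudef
      have hπu : π (Quotient.out u) = u := by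
        rw [hπdef, QuotientAddGroup.mk'_apply]
        exact QuotientAddGroup.out_eq' u
      have huy : u - π v ∈ C := by
        apply (QuotientAddGroup.eq_iff_sub_mem).1
        show QuotientAddGroup.mk u = QuotientAddGroup.mk (π v)
        rw [hudef, hy2def]
        exact QuotientAddGroup.out_eq' _
      obtain ⟨a, ha⟩ := AddSubgroup.mem_zmultiples_iff.1 huy
      set b : ℤ := -a with hbdef
      have hb : π v = u + b • gb := by
        rw [hbdef, neg_zsmul, ha]
        abel
      have hc0 : (0:ℤ) < (c:ℤ) := by exact_mod_cast hc1
      have hr0 : (0:ℤ) ≤ b % (c:ℤ) := Int.emod_nonneg b (by omega)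
      have hrlt : b % (c:ℤ) < (c:ℤ) := Int.emod_lt_of_pos b hc0
      set r : ℕ := (b % (c:ℤ)).toNat with hrdef
      have hrc : r < c := by omega
      have hreq : ((r:ℕ) : ℤ) = b % (c:ℤ) := Int.toNat_of_nonneg hr0
      have hb2 : b • gb = (r:ℕ) • gb := by
        rw [← natCast_zsmul gb r, hreq]
        conv_lhs => rw [← Int.mul_ediv_add_emod b (c:ℤ)]
        rw [add_zsmul]
        have hz : ((c:ℤ) * (b / (c:ℤ))) • gb = 0 := by
          rw [mul_comm, ← smul_smul, natCast_zsmul, hczero, smul_zero]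
        rw [hz, zero_add]
      have hbr : π v = u + (r:ℕ) • gb := by rw [hb, hb2]
      have hids : (r/s)*s + r%s = r := by rw [mul_comm]; exact Nat.div_add_mod r s
      have hj : r / s < t := by
        have h1 : r / s ≤ (c-1)/s := Nat.div_le_div_right (by omega)
        omega
      have hr2 : r % s < s := Nat.mod_lt r (by omega)
      set w1 : V := Quotient.out (Quotient.out y2) + ((r/s) * s) • g with hw1def
      set x0v : V := v - w1 - (r % s) • g with hx0vdef
      have hx0 : x0v ∈ H := by
        apply (QuotientAddGroup.eq_zero_iff _).1
        have hπx : π x0v = 0 := by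
          rw [hx0vdef, hw1def, map_sub, map_sub, map_add, map_nsmul, map_nsmul, ← hudef,
            hπu, hbr]
          have he : ((r/s)*s) • gb + (r%s) • gb = (r:ℕ) • gb := by
            rw [← add_nsmul, hids]
          rw [← he]
          abel
        rwa [hπdef, QuotientAddGroup.mk'_apply] at hπx
      refine ⟨f1 (⟨r/s, hj⟩, y2), ?_, f2 (⟨r % s, hr2⟩, ⟨x0v, hx0⟩), ?_, ?_⟩
      · exact Finset.mem_coe.2 (Finset.mem_image_of_mem f1 (Finset.mem_univ _))
      · exact Finset.mem_coe.2 (Finset.mem_image_of_mem f2 (Finset.mem_univ _))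
      · show (Quotient.out (Quotient.out y2) + ((r/s) * s) • g)
            - -((r % s) • g + x0v) = v
        rw [← hw1def, hx0vdef]
        abel
    · -- cardinality bound
      have hcard1 : Fintype.card ((V ⧸ H) ⧸ C) = N := by
        rw [hNdef, Nat.card_eq_fintype_card]
      have hcard2 : Fintype.card H = h := by
        rw [← hHcard, Nat.card_eq_fintype_card]
      have hW1 : (Finset.image f1 Finset.univ).card ≤ t * N := by
        refine le_trans Finset.card_image_le ?_
        rw [Finset.card_univ, Fintype.card_prod, Fintype.card_fin, hcard1]
      have hW2 : (Finset.image f2 Finset.univ).card ≤ s * h := by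
        refine le_trans Finset.card_image_le ?_
        rw [Finset.card_univ, Fintype.card_prod, Fintype.card_fin, hcard2]
      rcases le_or_gt (2*h) m with hcase | hcase
      · -- s ≥ 2
        have hs2 : 2 ≤ s := by
          rw [hsdef]
          exact (Nat.le_div_iff_mul_le (by omega)).2 (by omega)
        have st1 : t * s ≤ c - 1 + s := by
          rw [htdef, add_mul, one_mul]
          exact Nat.add_le_add_right (Nat.div_mul_le_self _ _) s
        have st2 : (c - 1 + s) * (N * h) ≤ 2*m*(s*h) := by
          have hNch : N * c * h ≤ m^2 := by rw [← hn_eq]; exact hnm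
          have hz := key_ineq (m:ℤ) (h:ℤ) (c:ℤ) (N:ℤ) (s:ℤ)
            (by exact_mod_cast hh1) (by exact_mod_cast hcase) (by exact_mod_cast hsh)
            (by exact_mod_cast hsh2) (by exact_mod_cast hhcm)
            (by exact_mod_cast hNch) (by exact_mod_cast hN1)
          zify [show 1 ≤ c by omega]
          exact_mod_cast hz
        have hpos : 0 < s * h := by positivity
        have st3 : t * N ≤ 2 * m := by
          refine Nat.le_of_mul_le_mul_right ?_ hpos
          calc t * N * (s * h) = (t * s) * (N * h) := by ring
            _ ≤ (c - 1 + s) * (N * h) := Nat.mul_le_mul_right _ st1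
            _ ≤ 2*m*(s*h) := st2
        calc (Finset.image f1 Finset.univ).card + (Finset.image f2 Finset.univ).card
            ≤ t * N + s * h := add_le_add hW1 hW2
          _ ≤ 2*m + m := add_le_add st3 hsh
          _ ≤ 3*m + 1 := by omega
      · -- s = 1
        have hs_eq : s = 1 := by
          rw [hsdef]
          exact Nat.div_eq_of_lt_le (by omega) (by omega)
        have ht_eq : t = c := by
          rw [htdef, hs_eq, Nat.div_one]
          omega
        have hb1 : N * c * h ≤ 2*m*h := by
          calc N * c * h = n := hn_eq.symm
            _ ≤ m^2 := hnm
            _ ≤ m * (2*h) := by rw [pow_two]; exact Nat.mul_le_mul_left m (by omega)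
            _ = 2*m*h := by ring
        have hb2 : N * c ≤ 2*m := by
          refine Nat.le_of_mul_le_mul_right ?_ (show 0 < h by omega)
          exact hb1
        have htN : t * N = N * c := by simp only [ht_eq]; ring
        have hsh1 : s * h = h := by rw [hs_eq, one_mul]
        calc (Finset.image f1 Finset.univ).card + (Finset.image f2 Finset.univ).card
            ≤ t * N + s * h := add_le_add hW1 hW2
          _ = N * c + h := by rw [htN, hsh1]
          _ ≤ 2*m + m := add_le_add hb2 hhm
          _ ≤ 3*m + 1 := by omega
end

section
/- Let G = G' × Z_{p^k} with p prime, H ≤ G, and H' = H ∩ (G' × {0}). Suppose h ∈ H has Z_{p^k}-component equal to p^j for some 0 ≤ j < k, and j is minimal: every element of H has Z_{p^k}-component divisible by p^j. Then H = H' + ⟨h⟩ and the index [H : H'] divides p^{k-j}. -/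
theorem stmt9 (G' : Type*) [AddCommGroup G'] [Finite G'] (p k : ℕ) (hp : p.Prime)
    (H H' : AddSubgroup (G' × ZMod (p ^ k)))
    (hH' : H' = H ⊓ (AddMonoidHom.snd G' (ZMod (p ^ k))).ker)
    (h : G' × ZMod (p ^ k)) (hh : h ∈ H) (j : ℕ) (hj : j < k)
    (hh2 : h.2 = (p : ZMod (p ^ k)) ^ j)
    (hmin : ∀ g ∈ H, ((p : ZMod (p ^ k)) ^ j) ∣ g.2) :
    H = H' ⊔ AddSubgroup.closure {h} ∧ H'.relIndex H ∣ p ^ (k - j) := by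
  haveI : NeZero (p ^ k) := ⟨pow_ne_zero k hp.ne_zero⟩
  constructor
  · apply le_antisymm
    · intro g hg
      obtain ⟨c, hc⟩ := hmin g hg
      rw [AddSubgroup.mem_sup]
      refine ⟨g - c.val • h, ?_, c.val • h, ?_, by abel⟩
      · rw [hH', AddSubgroup.mem_inf]
        refine ⟨sub_mem hg (AddSubgroup.nsmul_mem H hh _), ?_⟩
        rw [AddMonoidHom.mem_ker, AddMonoidHom.coe_snd]
        have h2 : (g - c.val • h).2 = g.2 - c.val • h.2 := rfl
        rw [h2, hc, hh2, nsmul_eq_mul, ZMod.natCast_val, ZMod.cast_id]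
        ring
      · exact AddSubgroup.nsmul_mem _ (AddSubgroup.mem_closure_singleton.mpr ⟨1, one_zsmul h⟩) _
    · rw [hH']
      refine sup_le inf_le_left ?_
      rw [AddSubgroup.closure_le]
      simpa using hh
  · set f := (AddMonoidHom.snd G' (ZMod (p ^ k))).comp H.subtype with hf
    have hker : H'.addSubgroupOf H = f.ker := by
      ext g
      simp [hH', AddSubgroup.mem_addSubgroupOf, AddMonoidHom.mem_ker, hf, g.2,
        AddSubgroup.mem_prod, AddSubgroup.mem_bot]
    have hrange : f.range ≤ AddSubgroup.zmultiples ((p : ZMod (p ^ k)) ^ j) := by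
      rintro x ⟨g, rfl⟩
      obtain ⟨c, hc⟩ := hmin g.1 g.2
      refine ⟨(c.val : ℤ), ?_⟩
      simp only [hf, AddMonoidHom.comp_apply, AddMonoidHom.coe_snd, AddSubgroup.coe_subtype]
      rw [hc, natCast_zsmul, nsmul_eq_mul, ZMod.natCast_val, ZMod.cast_id]
      ring
    have hcard : Nat.card (AddSubgroup.zmultiples ((p : ZMod (p ^ k)) ^ j)) = p ^ (k - j) := by
      rw [Nat.card_zmultiples]
      have : ((p : ZMod (p ^ k)) ^ j) = ((p ^ j : ℕ) : ZMod (p ^ k)) := by push_cast; ring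
      rw [this, ZMod.addOrderOf_coe _ (pow_ne_zero k hp.ne_zero),
        Nat.gcd_eq_right (pow_dvd_pow p hj.le), Nat.pow_div hj.le hp.pos]
    rw [AddSubgroup.relIndex, hker, AddSubgroup.index_ker, ← hcard]
    exact AddSubgroup.card_dvd_of_le hrange
end

section
/- Let G = Z_{p1^{k1}} × ... × Z_{pl^{kl}} and H ≤ G. Define d = min over nonzero h ∈ H of the largest index of a nonzero coordinate of h (d = l+1 if H is trivial). If H is nontrivial, then |H| divides ∏_{i=d}^{l} p_i^{k_i}, and consequently ∏_{i=1}^{d-1} p_i^{k_i} ≤ |G|/|H|. -/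
theorem stmt12 (l : ℕ) (p k : Fin l → ℕ) (hp : ∀ i, (p i).Prime) (hk : ∀ i, 1 ≤ k i)
    (H : AddSubgroup (∀ i : Fin l, ZMod (p i ^ k i))) (d : ℕ)
    (hmem : ∃ h ∈ H, h ≠ 0 ∧ ∀ m : Fin l, d < (m : ℕ) + 1 → h m = 0)
    (hmin : ∀ h ∈ H, h ≠ 0 → ∃ m : Fin l, d ≤ (m : ℕ) + 1 ∧ h m ≠ 0) :
    Nat.card H ∣ ∏ i : Fin l, (if d ≤ (i : ℕ) + 1 then p i ^ k i else 1) ∧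
    ∏ i : Fin l, (if (i : ℕ) + 1 < d then p i ^ k i else 1) ≤
      Nat.card (∀ i : Fin l, ZMod (p i ^ k i)) / Nat.card H := by
  haveI : ∀ i : Fin l, NeZero (p i ^ k i) := fun i =>
    ⟨pow_ne_zero _ (hp i).ne_zero⟩
  set S := {i : Fin l // d ≤ (i : ℕ) + 1}
  -- restriction hom
  let f : (∀ i : Fin l, ZMod (p i ^ k i)) →+ (∀ i : S, ZMod (p i.1 ^ k i.1)) :=
    { toFun := fun x i => x i.1
      map_zero' := rfl
      map_add' := fun _ _ => rfl }
  let g := f.comp H.subtype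
  have hginj : Function.Injective g := by
    intro a b hab
    by_contra hne
    have hsub : ((a : ∀ i : Fin l, ZMod (p i ^ k i)) - b) ∈ H := H.sub_mem a.2 b.2
    have hne' : ((a : ∀ i : Fin l, ZMod (p i ^ k i)) - b) ≠ 0 := by
      intro h0
      exact hne (Subtype.ext (by linear_combination (norm := abel) h0))
    obtain ⟨m, hm, hm0⟩ := hmin _ hsub hne'
    apply hm0
    have : g a ⟨m, hm⟩ = g b ⟨m, hm⟩ := by rw [hab]
    simpa [g, f, sub_eq_zero] using this
  have hcardS : Nat.card H = Nat.card g.range :=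
    Nat.card_congr (AddMonoidHom.ofInjective hginj).toEquiv
  have hA : Nat.card H ∣ ∏ i : Fin l, (if d ≤ (i : ℕ) + 1 then p i ^ k i else 1) := by
    have h1 : Nat.card H ∣ Nat.card (∀ i : S, ZMod (p i.1 ^ k i.1)) := by
      rw [hcardS]; exact AddSubgroup.card_addSubgroup_dvd_card _
    have h2 : Nat.card (∀ i : S, ZMod (p i.1 ^ k i.1)) =
        ∏ i : Fin l, (if d ≤ (i : ℕ) + 1 then p i ^ k i else 1) := by
      simp only [Nat.card_pi, Nat.card_zmod]
      rw [← Finset.prod_filter]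
      exact (Finset.prod_subtype (Finset.univ.filter fun i : Fin l => d ≤ (i : ℕ) + 1)
        (fun x => by simp) (fun i => p i ^ k i)).symm
    rwa [h2] at h1
  refine ⟨hA, ?_⟩
  have hHpos : 0 < Nat.card H := Nat.card_pos
  have hGcard : Nat.card (∀ i : Fin l, ZMod (p i ^ k i)) =
      (∏ i : Fin l, (if (i : ℕ) + 1 < d then p i ^ k i else 1)) *
      (∏ i : Fin l, (if d ≤ (i : ℕ) + 1 then p i ^ k i else 1)) := by
    rw [Nat.card_pi, ← Finset.prod_mul_distrib]
    refine Finset.prod_congr rfl fun i _ => ?_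
    rw [Nat.card_zmod]
    rcases lt_or_ge ((i : ℕ) + 1) d with h | h
    · simp [h, Nat.not_le.mpr h]
    · simp [h, Nat.not_lt.mpr h]
  obtain ⟨t, ht⟩ := hA
  have hbig : (∏ i : Fin l, (if d ≤ (i : ℕ) + 1 then p i ^ k i else 1)) ≠ 0 :=
    (Finset.prod_pos fun i _ => by
      split
      · exact pow_pos (hp i).pos _
      · exact one_pos).ne'
  have htpos : 0 < t := Nat.pos_of_ne_zero (by
    rintro rfl
    exact hbig (by simpa using ht))
  rw [hGcard, ht, ← mul_assoc, mul_right_comm, Nat.mul_div_cancel _ hHpos]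
  exact Nat.le_mul_of_pos_right _ htpos
end
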